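/- arXiv:1004.5249 — 4 statements merged into one kernel-verified Lean document; each statement's English description precedes it below -/
import Mathlib

section
/- In a Quillen model category, with notation as in the mapping-path-object construction: p : X → Y a weak equivalence of fibrant objects, P the pullback of π : Y^I → Y × Y along p × id : X × Y → Y × Y, then the map q₃ : P → Y given by composing P → X × Y with the projection to Y is a trivial fibration. -/
open CategoryTheory CategoryTheory.Limits

universe v u

/-- A Quillen (closed) model structure on a category `C`. -/
structure QuillenModelStructure (C : Type u) [Category.{v} C]
    [HasFiniteLimits C] [HasFiniteColimits C] where
  weq : MorphismProperty C
  fib : MorphismProperty C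
  cof : MorphismProperty C
  weq_of_iso : ∀ {X Y : C} (f : X ⟶ Y), IsIso f → weq f
  fib_of_iso : ∀ {X Y : C} (f : X ⟶ Y), IsIso f → fib f
  cof_of_iso : ∀ {X Y : C} (f : X ⟶ Y), IsIso f → cof f
  weq_comp : ∀ {X Y Z : C} (f : X ⟶ Y) (g : Y ⟶ Z), weq f → weq g → weq (f ≫ g)
  weq_of_comp_left : ∀ {X Y Z : C} (f : X ⟶ Y) (g : Y ⟶ Z), weq g → weq (f ≫ g) → weq f
  weq_of_comp_right : ∀ {X Y Z : C} (f : X ⟶ Y) (g : Y ⟶ Z), weq f → weq (f ≫ g) → weq g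
  weq_retract : ∀ {X Y X' Y' : C} (f : X ⟶ Y) (f' : X' ⟶ Y')
    (iX : X' ⟶ X) (rX : X ⟶ X') (iY : Y' ⟶ Y) (rY : Y ⟶ Y'),
    iX ≫ rX = 𝟙 X' → iY ≫ rY = 𝟙 Y' → iX ≫ f = f' ≫ iY → f ≫ rY = rX ≫ f' →
    weq f → weq f'
  fib_retract : ∀ {X Y X' Y' : C} (f : X ⟶ Y) (f' : X' ⟶ Y')
    (iX : X' ⟶ X) (rX : X ⟶ X') (iY : Y' ⟶ Y) (rY : Y ⟶ Y'),
    iX ≫ rX = 𝟙 X' → iY ≫ rY = 𝟙 Y' → iX ≫ f = f' ≫ iY → f ≫ rY = rX ≫ f' →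
    fib f → fib f'
  cof_retract : ∀ {X Y X' Y' : C} (f : X ⟶ Y) (f' : X' ⟶ Y')
    (iX : X' ⟶ X) (rX : X ⟶ X') (iY : Y' ⟶ Y) (rY : Y ⟶ Y'),
    iX ≫ rX = 𝟙 X' → iY ≫ rY = 𝟙 Y' → iX ≫ f = f' ≫ iY → f ≫ rY = rX ≫ f' →
    cof f → cof f'
  lift_cof_trivFib : ∀ {A B X Y : C} (i : A ⟶ B) (p : X ⟶ Y),
    cof i → fib p → weq p → HasLiftingProperty i p
  lift_trivCof_fib : ∀ {A B X Y : C} (i : A ⟶ B) (p : X ⟶ Y),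
    cof i → weq i → fib p → HasLiftingProperty i p
  factor_cof_trivFib : ∀ {X Y : C} (f : X ⟶ Y), ∃ (Z : C) (i : X ⟶ Z) (q : Z ⟶ Y),
    cof i ∧ fib q ∧ weq q ∧ i ≫ q = f
  factor_trivCof_fib : ∀ {X Y : C} (f : X ⟶ Y), ∃ (Z : C) (i : X ⟶ Z) (q : Z ⟶ Y),
    cof i ∧ weq i ∧ fib q ∧ i ≫ q = f

variable {C : Type u} [Category.{v} C] [HasFiniteLimits C] [HasFiniteColimits C]

/-- An object is fibrant if the map to the terminal object is a fibration. -/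
def QuillenModelStructure.Fibrant (M : QuillenModelStructure C) (X : C) : Prop :=
  M.fib (terminal.from X)

/-- An object is cofibrant if the map from the initial object is a cofibration. -/
def QuillenModelStructure.Cofibrant (M : QuillenModelStructure C) (X : C) : Prop :=
  M.cof (initial.to X)

/-- RLP transfers along pullbacks. -/
lemma hasLiftingProperty_of_isPullback {P X Y Z A B : C} {fst : P ⟶ X} {snd : P ⟶ Y}
    {f : X ⟶ Z} {g : Y ⟶ Z} (h : IsPullback fst snd f g) (i : A ⟶ B)
    (hg : HasLiftingProperty i g) : HasLiftingProperty i fst := by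
  constructor
  intro a b sq
  have w : (i ≫ b) ≫ f = (a ≫ snd) ≫ g := by
    rw [← sq.w]; simp [Category.assoc, h.w]
  have sq' : CommSq (a ≫ snd) i g (b ≫ f) :=
    ⟨by rw [← Category.assoc, ← sq.w]; simp [Category.assoc, h.w]⟩
  obtain ⟨⟨l⟩⟩ := hg.sq_hasLift sq'
  refine ⟨⟨⟨h.lift b l.l (by rw [l.fac_right]), ?_, by simp⟩⟩⟩
  apply h.hom_ext
  · simp [sq.w]
  · simp [l.fac_left]

/-- Any map with the RLP against trivial cofibrations is a fibration. -/
lemma QuillenModelStructure.fib_of_rlp (M : QuillenModelStructure C) {A B : C} (f : A ⟶ B)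
    (h : ∀ {E F : C} (i : E ⟶ F), M.cof i → M.weq i → HasLiftingProperty i f) : M.fib f := by
  obtain ⟨Z, i, q, hi, hwi, hq, hfac⟩ := M.factor_trivCof_fib f
  have hlift := h i hi hwi
  have sq : CommSq (𝟙 A) i f q := ⟨by simp [hfac]⟩
  obtain ⟨⟨l⟩⟩ := hlift.sq_hasLift sq
  exact M.fib_retract q f i l.l (𝟙 B) (𝟙 B) l.fac_left (by simp)
    (by simp [hfac]) (by simp [l.fac_right]) hq

/-- Any map with the RLP against cofibrations is a trivial fibration. -/
lemma QuillenModelStructure.trivFib_of_rlp (M : QuillenModelStructure C) {A B : C} (f : A ⟶ B)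
    (h : ∀ {E F : C} (i : E ⟶ F), M.cof i → HasLiftingProperty i f) : M.fib f ∧ M.weq f := by
  obtain ⟨Z, i, q, hi, hq, hwq, hfac⟩ := M.factor_cof_trivFib f
  have hlift := h i hi
  have sq : CommSq (𝟙 A) i f q := ⟨by simp [hfac]⟩
  obtain ⟨⟨l⟩⟩ := hlift.sq_hasLift sq
  refine ⟨M.fib_retract q f i l.l (𝟙 B) (𝟙 B) l.fac_left (by simp)
    (by simp [hfac]) (by simp [l.fac_right]) hq,
    M.weq_retract q f i l.l (𝟙 B) (𝟙 B) l.fac_left (by simp)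
    (by simp [hfac]) (by simp [l.fac_right]) hwq⟩

/-- Fibrations are stable under pullback. -/
lemma QuillenModelStructure.fib_of_isPullback (M : QuillenModelStructure C)
    {P X Y Z : C} {fst : P ⟶ X} {snd : P ⟶ Y} {f : X ⟶ Z} {g : Y ⟶ Z}
    (h : IsPullback fst snd f g) (hg : M.fib g) : M.fib fst :=
  M.fib_of_rlp fst fun i hi hwi =>
    hasLiftingProperty_of_isPullback h i (M.lift_trivCof_fib i g hi hwi hg)

/-- Trivial fibrations are stable under pullback. -/
lemma QuillenModelStructure.trivFib_of_isPullback (M : QuillenModelStructure C)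
    {P X Y Z : C} {fst : P ⟶ X} {snd : P ⟶ Y} {f : X ⟶ Z} {g : Y ⟶ Z}
    (h : IsPullback fst snd f g) (hg : M.fib g) (hwg : M.weq g) : M.fib fst ∧ M.weq fst :=
  M.trivFib_of_rlp fst fun i hi =>
    hasLiftingProperty_of_isPullback h i (M.lift_cof_trivFib i g hi hg hwg)

/-- Fibrations are stable under composition. -/
lemma QuillenModelStructure.fib_comp (M : QuillenModelStructure C) {A B D : C}
    (f : A ⟶ B) (g : B ⟶ D) (hf : M.fib f) (hg : M.fib g) : M.fib (f ≫ g) :=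
  M.fib_of_rlp _ fun i hi hwi => by
    have h1 := M.lift_trivCof_fib i f hi hwi hf
    have h2 := M.lift_trivCof_fib i g hi hwi hg
    infer_instance

/-- If `p : X ⟶ Y` is a weak equivalence of fibrant objects, then the map
`q₃ = proj_Y ∘ q₁ : P ⟶ Y` from the mapping path object is a trivial fibration. -/
theorem mappingPathObject_to_target_trivFib (M : QuillenModelStructure C) {X Y : C}
    (p : X ⟶ Y) (hp : M.weq p) (hX : M.Fibrant X) (hY : M.Fibrant Y)
    (YI : C) (j : Y ⟶ YI) (π : YI ⟶ Y ⨯ Y)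
    (hj : M.weq j) (hπ : M.fib π) (hfact : j ≫ π = prod.lift (𝟙 Y) (𝟙 Y)) :
    M.fib (pullback.fst (prod.map p (𝟙 Y)) π ≫ prod.snd) ∧
      M.weq (pullback.fst (prod.map p (𝟙 Y)) π ≫ prod.snd) := by
  set q₁ : pullback (prod.map p (𝟙 Y)) π ⟶ X ⨯ Y := pullback.fst (prod.map p (𝟙 Y)) π with hq₁
  have hpb : IsPullback q₁ (pullback.snd (prod.map p (𝟙 Y)) π) (prod.map p (𝟙 Y)) π :=
    IsPullback.of_hasPullback _ _
  have hXY : IsPullback (prod.fst : X ⨯ Y ⟶ X) (prod.snd : X ⨯ Y ⟶ Y)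
      (terminal.from X) (terminal.from Y) := IsPullback.of_hasBinaryProduct' X Y
  have hYY : IsPullback (prod.fst : Y ⨯ Y ⟶ Y) (prod.snd : Y ⨯ Y ⟶ Y)
      (terminal.from Y) (terminal.from Y) := IsPullback.of_hasBinaryProduct' Y Y
  -- the square `X ⨯ Y → Y ⨯ Y → Y` over `X → Y` is a pullback
  have hbigXY : IsPullback (prod.fst : X ⨯ Y ⟶ X) (prod.map p (𝟙 Y) ≫ prod.snd)
      (p ≫ terminal.from Y) (terminal.from Y) := by simpa using hXY
  have t2 : IsPullback (prod.fst : X ⨯ Y ⟶ X) (prod.map p (𝟙 Y)) p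
      (prod.fst : Y ⨯ Y ⟶ Y) := IsPullback.of_bot hbigXY (by simp) hYY
  -- the pasted square: `P → X` is the pullback of `π ≫ prod.fst` along `p`
  have hbig : IsPullback (q₁ ≫ prod.fst) (pullback.snd (prod.map p (𝟙 Y)) π) p
      (π ≫ prod.fst) := hpb.paste_horiz t2
  -- `π ≫ prod.fst` is a trivial fibration
  have hfib_fstYY : M.fib (prod.fst : Y ⨯ Y ⟶ Y) := M.fib_of_isPullback hYY hY
  have hfib_πfst : M.fib (π ≫ prod.fst) := M.fib_comp _ _ hπ hfib_fstYY
  have hid : j ≫ (π ≫ prod.fst) = 𝟙 Y := by rw [← Category.assoc, hfact]; exact prod.lift_fst _ _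
  have hweq_πfst : M.weq (π ≫ prod.fst) :=
    M.weq_of_comp_right j (π ≫ prod.fst) hj (by rw [hid]; exact M.weq_of_iso _ inferInstance)
  -- hence `q₁ ≫ prod.fst` is a trivial fibration
  obtain ⟨hfibA, hweqA⟩ := M.trivFib_of_isPullback hbig hfib_πfst hweq_πfst
  -- the canonical section of `q₁ ≫ prod.fst`
  have w : prod.lift (𝟙 X) p ≫ prod.map p (𝟙 Y) = (p ≫ j) ≫ π := by
    rw [Category.assoc, hfact]; apply Limits.prod.hom_ext <;> simp
  set s : X ⟶ pullback (prod.map p (𝟙 Y)) π := pullback.lift _ _ w with hs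
  have hs1 : s ≫ (q₁ ≫ prod.fst) = 𝟙 X := by
    rw [hs, hq₁, ← Category.assoc, pullback.lift_fst]; exact prod.lift_fst _ _
  have hs2 : s ≫ (q₁ ≫ prod.snd) = p := by
    rw [hs, hq₁, ← Category.assoc, pullback.lift_fst]; exact prod.lift_snd _ _
  have hweqs : M.weq s :=
    M.weq_of_comp_left s (q₁ ≫ prod.fst) hweqA
      (by rw [hs1]; exact M.weq_of_iso _ inferInstance)
  constructor
  · exact M.fib_comp _ _ (M.fib_of_isPullback hpb hπ) (M.fib_of_isPullback hXY.flip hX)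
  · exact M.weq_of_comp_right s (q₁ ≫ prod.snd) hweqs (by rw [hs2]; exact hp)
end

section
/- Let p : X → Y be a morphism between fibrant objects in a Quillen model category. If p has the right homotopy extension lifting property with respect to every cofibration (for a fixed path object Y^I of Y), then p is a weak equivalence. -/
open CategoryTheory CategoryTheory.Limits

universe v u

variable {C : Type u} [Category.{v} C] [HasFiniteLimits C] [HasFiniteColimits C]

attribute [local simp] prod.lift_fst prod.lift_snd prod.lift_fst_assoc prod.lift_snd_assoc pullback.lift_fst pullback.lift_snd pullback.lift_fst_assoc pullback.lift_snd_assoc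

namespace QuillenModelStructure

/-- Retract argument: a morphism with the RLP with respect to all trivial cofibrations
is a fibration. -/
lemma fib_of_rlp_s9 (M : QuillenModelStructure C) {E W : C} (q : E ⟶ W)
    (H : ∀ {A B : C} (i : A ⟶ B), M.cof i → M.weq i → HasLiftingProperty i q) :
    M.fib q := by
  obtain ⟨Z, i, q', hci, hwi, hfq', hfac⟩ := M.factor_trivCof_fib q
  haveI := H i hci hwi
  have sq : CommSq (𝟙 E) i q q' := ⟨by simp [hfac]⟩
  exact M.fib_retract q' q i sq.lift (𝟙 W) (𝟙 W) sq.fac_left (by simp)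
    (by simp [hfac]) (by simpa using sq.fac_right.symm) hfq'

/-- Retract argument: a morphism with the RLP with respect to all cofibrations
is a trivial fibration. -/
lemma trivFib_of_rlp_s9 (M : QuillenModelStructure C) {E W : C} (q : E ⟶ W)
    (H : ∀ {A B : C} (i : A ⟶ B), M.cof i → HasLiftingProperty i q) :
    M.fib q ∧ M.weq q := by
  obtain ⟨Z, i, q', hci, hfq', hwq', hfac⟩ := M.factor_cof_trivFib q
  haveI := H i hci
  have sq : CommSq (𝟙 E) i q q' := ⟨by simp [hfac]⟩
  refine ⟨M.fib_retract q' q i sq.lift (𝟙 W) (𝟙 W) sq.fac_left (by simp)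
      (by simp [hfac]) (by simpa using sq.fac_right.symm) hfq',
    M.weq_retract q' q i sq.lift (𝟙 W) (𝟙 W) sq.fac_left (by simp)
      (by simp [hfac]) (by simpa using sq.fac_right.symm) hwq'⟩

/-- If `i` lifts against `terminal.from Z`, it lifts against `prod.fst : W ⨯ Z ⟶ W`. -/
lemma rlp_fst {A B W Z : C} (i : A ⟶ B) [HasLiftingProperty i (terminal.from Z)] :
    HasLiftingProperty i (prod.fst : W ⨯ Z ⟶ W) := by
  constructor
  intro u v sq
  have sq2 : CommSq (u ≫ prod.snd) i (terminal.from Z) (terminal.from B) :=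
    ⟨Subsingleton.elim _ _⟩
  exact ⟨⟨⟨prod.lift v sq2.lift,
    by apply Limits.prod.hom_ext <;> simp [← sq.w, sq2.fac_left], by simp⟩⟩⟩

end QuillenModelStructure

/-- Converse HELP lemma: a map of fibrant objects with the right homotopy extension
lifting property with respect to all cofibrations is a weak equivalence. -/
theorem weq_of_right_HELP (M : QuillenModelStructure C) {X Y : C}
    (p : X ⟶ Y) (hX : M.Fibrant X) (hY : M.Fibrant Y)
    (YI : C) (j : Y ⟶ YI) (π : YI ⟶ Y ⨯ Y)
    (hj : M.weq j) (hπ : M.fib π) (hfact : j ≫ π = prod.lift (𝟙 Y) (𝟙 Y))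
    (help : ∀ {A B : C} (i : A ⟶ B), M.cof i →
      ∀ (fA : A ⟶ X) (g : B ⟶ Y) (hA : A ⟶ YI),
        hA ≫ π = prod.lift (fA ≫ p) (i ≫ g) →
        ∃ (f : B ⟶ X) (h : B ⟶ YI),
          i ≫ f = fA ∧ i ≫ h = hA ∧ h ≫ π = prod.lift (f ≫ p) g) :
    M.weq p := by
  -- the two "endpoint" maps of the path object
  set d0 : YI ⟶ Y := π ≫ prod.fst with hd0
  set d1 : YI ⟶ Y := π ≫ prod.snd with hd1
  have hjd0 : j ≫ d0 = 𝟙 Y := by rw [hd0, ← Category.assoc, hfact]; simp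
  have hwd0 : M.weq d0 :=
    M.weq_of_comp_right j d0 hj (hjd0 ▸ M.weq_of_iso (𝟙 Y) inferInstance)
  have hfd0 : M.fib d0 := M.fib_of_rlp_s9 d0 (fun i hci hwi => by
    haveI : HasLiftingProperty i π := M.lift_trivCof_fib i π hci hwi hπ
    haveI : HasLiftingProperty i (terminal.from Y) :=
      M.lift_trivCof_fib i _ hci hwi hY
    haveI : HasLiftingProperty i (prod.fst : Y ⨯ Y ⟶ Y) :=
      QuillenModelStructure.rlp_fst i
    infer_instance)
  -- the mapping path object
  set φ : X ⨯ Y ⟶ Y ⨯ Y := prod.map p (𝟙 Y) with hφ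
  set a : pullback π φ ⟶ YI := pullback.fst π φ with ha
  set b : pullback π φ ⟶ X ⨯ Y := pullback.snd π φ with hb
  have hab : a ≫ π = b ≫ φ := pullback.condition
  set q₁ : pullback π φ ⟶ X := b ≫ prod.fst with hq₁
  set q₃ : pullback π φ ⟶ Y := b ≫ prod.snd with hq₃
  -- q₁ has the RLP with respect to all cofibrations
  have hq1rlp : ∀ {A B : C} (i : A ⟶ B), M.cof i → HasLiftingProperty i q₁ := by
    intro A B i hci
    haveI : HasLiftingProperty i d0 := M.lift_cof_trivFib i d0 hci hfd0 hwd0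
    constructor
    intro u v sq
    have sq2 : CommSq (u ≫ a) i d0 (v ≫ p) := ⟨by
      have hw := sq.w
      simp only [hq₁, Category.assoc] at hw
      calc (u ≫ a) ≫ d0 = u ≫ (a ≫ π) ≫ prod.fst := by simp [hd0]
        _ = u ≫ (b ≫ φ) ≫ prod.fst := by rw [hab]
        _ = (u ≫ b ≫ prod.fst) ≫ p := by simp [hφ]
        _ = i ≫ v ≫ p := by rw [hw, Category.assoc]⟩
    have key : sq2.lift ≫ π = (prod.lift v (sq2.lift ≫ d1)) ≫ φ := by
      apply Limits.prod.hom_ext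
      · rw [Category.assoc, ← hd0, sq2.fac_right]
        simp [hφ]
      · simp [hφ, hd1]
    refine ⟨⟨⟨pullback.lift sq2.lift (prod.lift v (sq2.lift ≫ d1)) key, ?_, ?_⟩⟩⟩
    · apply pullback.hom_ext
      · simpa [ha] using sq2.fac_left
      · rw [Category.assoc]
        show i ≫ pullback.lift _ _ _ ≫ b = u ≫ b
        rw [hb, pullback.lift_snd]
        apply Limits.prod.hom_ext
        · simpa [hq₁] using sq.w.symm
        · have h2 : u ≫ a ≫ d1 = u ≫ b ≫ prod.snd := by
            rw [hd1, ← Category.assoc a, hab]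
            simp [hφ]
          simp only [prod.comp_lift, prod.lift_snd, ← Category.assoc]
          rw [sq2.fac_left]
          simpa using h2
    · rw [hq₁, ← Category.assoc]
      show (pullback.lift _ _ _ ≫ b) ≫ prod.fst = v
      rw [hb, pullback.lift_snd]; simp
  -- q₃ has the RLP with respect to all cofibrations, via HELP
  have hq3rlp : ∀ {A B : C} (i : A ⟶ B), M.cof i → HasLiftingProperty i q₃ := by
    intro A B i hci
    constructor
    intro u g sq
    obtain ⟨f, h, hfA, hhA, hhπ⟩ := help i hci (u ≫ q₁) g (u ≫ a) (by
      have habu : (u ≫ a) ≫ π = (u ≫ b) ≫ φ := by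
        rw [Category.assoc, hab, Category.assoc]
      rw [habu]
      apply Limits.prod.hom_ext
      · simp [hφ, hq₁]
      · have hw := sq.w
        simp only [hq₃, Category.assoc] at hw
        simp [hφ, hw])
    have key : h ≫ π = (prod.lift f g) ≫ φ := by
      rw [hhπ]; apply Limits.prod.hom_ext <;> simp [hφ]
    refine ⟨⟨⟨pullback.lift h (prod.lift f g) key, ?_, ?_⟩⟩⟩
    · apply pullback.hom_ext
      · simpa [ha] using hhA
      · rw [Category.assoc]
        show i ≫ pullback.lift _ _ _ ≫ b = u ≫ b
        rw [hb, pullback.lift_snd]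
        apply Limits.prod.hom_ext
        · simpa [hq₁] using hfA
        · simpa [hq₃] using sq.w.symm
    · rw [hq₃, ← Category.assoc]
      show (pullback.lift _ _ _ ≫ b) ≫ prod.snd = g
      rw [hb, pullback.lift_snd]; simp
  have hwq1 : M.weq q₁ := (M.trivFib_of_rlp_s9 q₁ hq1rlp).2
  have hwq3 : M.weq q₃ := (M.trivFib_of_rlp_s9 q₃ hq3rlp).2
  -- the canonical section s : X ⟶ P
  have hskey : (p ≫ j) ≫ π = (prod.lift (𝟙 X) p) ≫ φ := by
    rw [Category.assoc, hfact]
    apply Limits.prod.hom_ext <;> simp [hφ]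
  set s : X ⟶ pullback π φ := pullback.lift (p ≫ j) (prod.lift (𝟙 X) p) hskey with hs
  have hs1 : s ≫ q₁ = 𝟙 X := by
    rw [hq₁, ← Category.assoc, hs, hb, pullback.lift_snd]; simp
  have hs3 : s ≫ q₃ = p := by
    rw [hq₃, ← Category.assoc, hs, hb, pullback.lift_snd]; simp
  have hws : M.weq s :=
    M.weq_of_comp_left s q₁ hwq1 (hs1 ▸ M.weq_of_iso (𝟙 X) inferInstance)
  have := M.weq_comp s q₃ hws hwq3
  rwa [hs3] at this
end

section
/- A morphism p : X → Y between fibrant objects in a Quillen model category is a weak equivalence if and only if it has the right homotopy extension lifting property with respect to all cofibrations. -/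
open CategoryTheory CategoryTheory.Limits

universe v u

variable {C : Type u} [Category.{v} C] [HasFiniteLimits C] [HasFiniteColimits C]

set_option linter.unusedSectionVars false

namespace QuillenModelStructure

section Helpers

variable {C : Type u} [Category.{v} C] [HasFiniteLimits C] [HasFiniteColimits C]
variable (M : QuillenModelStructure C)

lemma retract_of_lift {U V W : C} (f : U ⟶ V) (c : U ⟶ W) (t : W ⟶ V)
    (hct : c ≫ t = f) (hl : HasLiftingProperty c f) :
    ∃ k : W ⟶ U, c ≫ k = 𝟙 U ∧ k ≫ f = t := by
  haveI := hl
  have sq : CommSq (𝟙 U) c f t := ⟨by simp [hct]⟩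
  exact ⟨sq.lift, sq.fac_left, sq.fac_right⟩

lemma weq_of_rlp {U V : C} (f : U ⟶ V)
    (H : ∀ {A B : C} (c : A ⟶ B), M.cof c → HasLiftingProperty c f) : M.weq f := by
  obtain ⟨W, c, t, hc, htf, htw, hct⟩ := M.factor_cof_trivFib f
  obtain ⟨k, hk1, hk2⟩ := retract_of_lift f c t hct (H c hc)
  exact M.weq_retract t f c k (𝟙 V) (𝟙 V) hk1 (by simp) (by simp [hct]) (by simp [hk2]) htw

lemma fib_of_rlp_s10 {U V : C} (f : U ⟶ V)
    (H : ∀ {A B : C} (c : A ⟶ B), M.cof c → M.weq c → HasLiftingProperty c f) : M.fib f := by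
  obtain ⟨W, c, t, hc, hcw, htf, hct⟩ := M.factor_trivCof_fib f
  obtain ⟨k, hk1, hk2⟩ := retract_of_lift f c t hct (H c hc hcw)
  exact M.fib_retract t f c k (𝟙 V) (𝟙 V) hk1 (by simp) (by simp [hct]) (by simp [hk2]) htf

lemma extend_fibrant {Z : C} (hZ : M.Fibrant Z)
    {A B : C} (i : A ⟶ B) (hi : M.cof i) (hiw : M.weq i) (u : A ⟶ Z) :
    ∃ v : B ⟶ Z, i ≫ v = u := by
  haveI := M.lift_trivCof_fib i (terminal.from Z) hi hiw hZ
  have sq : CommSq u i (terminal.from Z) (terminal.from B) := ⟨Subsingleton.elim _ _⟩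
  exact ⟨sq.lift, sq.fac_left⟩

lemma hlp_pullback_fst {X Y S : C} (f : X ⟶ S) (g : Y ⟶ S)
    {A B : C} (i : A ⟶ B) (hg : HasLiftingProperty i g) :
    HasLiftingProperty i (pullback.fst f g) := by
  constructor
  intro u v sq
  haveI := hg
  have sq2 : CommSq (u ≫ pullback.snd f g) i g (v ≫ f) := ⟨by
    rw [Category.assoc, ← pullback.condition, ← Category.assoc, ← Category.assoc, sq.w]⟩
  refine ⟨⟨⟨pullback.lift v sq2.lift sq2.fac_right.symm, ?_, pullback.lift_fst _ _ _⟩⟩⟩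
  apply pullback.hom_ext
  · rw [Category.assoc, pullback.lift_fst, sq.w]
  · rw [Category.assoc, pullback.lift_snd, sq2.fac_left]

lemma hlp_prod_fst {Y : C} (hY : M.Fibrant Y)
    {A B : C} (i : A ⟶ B) (hi : M.cof i) (hiw : M.weq i) :
    HasLiftingProperty i (prod.fst : Y ⨯ Y ⟶ Y) := by
  constructor
  intro u v sq
  obtain ⟨w, hw⟩ := M.extend_fibrant hY i hi hiw (u ≫ prod.snd)
  refine ⟨⟨⟨prod.lift v w, ?_, prod.lift_fst _ _⟩⟩⟩
  apply Limits.prod.hom_ext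
  · rw [Category.assoc, prod.lift_fst, sq.w]
  · rw [Category.assoc, prod.lift_snd, hw]

/-- Key lemma: for a path object on `Y`, the mapping-path-space projection
`ψ : X ×_Y Y^I → Y` is a fibration, and `p` is a weak equivalence iff `ψ` is. -/
lemma psi_key {X Y : C} (p : X ⟶ Y) (hX : M.Fibrant X) (hY : M.Fibrant Y)
    (YI : C) (j : Y ⟶ YI) (π : YI ⟶ Y ⨯ Y)
    (hjw : M.weq j) (hπ : M.fib π) (hjπ : j ≫ π = prod.lift (𝟙 Y) (𝟙 Y)) :
    M.fib (pullback.snd p (π ≫ prod.fst) ≫ π ≫ prod.snd) ∧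
      (M.weq p ↔ M.weq (pullback.snd p (π ≫ prod.fst) ≫ π ≫ prod.snd)) := by
  set π₀ : YI ⟶ Y := π ≫ prod.fst with hπ₀def
  set π₁ : YI ⟶ Y := π ≫ prod.snd with hπ₁def
  have hjπ₀ : j ≫ π₀ = 𝟙 Y := by rw [hπ₀def, ← Category.assoc, hjπ]; exact prod.lift_fst _ _
  have hjπ₁ : j ≫ π₁ = 𝟙 Y := by rw [hπ₁def, ← Category.assoc, hjπ]; exact prod.lift_snd _ _
  have hπ₀w : M.weq π₀ := by
    refine M.weq_of_comp_right j π₀ hjw ?_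
    rw [hjπ₀]; exact M.weq_of_iso _ inferInstance
  have hπ₀f : M.fib π₀ := by
    refine M.fib_of_rlp_s10 π₀ fun {A B} c hc hcw => ?_
    haveI := M.lift_trivCof_fib c π hc hcw hπ
    haveI := M.hlp_prod_fst hY c hc hcw
    rw [hπ₀def]
    infer_instance
  set E := pullback p π₀
  set e₁ : E ⟶ X := pullback.fst p π₀
  set e₂ : E ⟶ YI := pullback.snd p π₀
  set ψ : E ⟶ Y := e₂ ≫ π₁ with hψdef
  have hcond : e₁ ≫ p = e₂ ≫ π₀ := pullback.condition
  have he₁w : M.weq e₁ := by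
    refine M.weq_of_rlp e₁ fun {A B} c hc => ?_
    exact hlp_pullback_fst p π₀ c (M.lift_cof_trivFib c π₀ hc hπ₀f hπ₀w)
  have hιc : 𝟙 X ≫ p = (p ≫ j) ≫ π₀ := by
    rw [Category.id_comp, Category.assoc, hjπ₀, Category.comp_id]
  set ι : X ⟶ E := pullback.lift (𝟙 X) (p ≫ j) hιc with hιdef
  have hιe₁ : ι ≫ e₁ = 𝟙 X := pullback.lift_fst _ _ _
  have hιe₂ : ι ≫ e₂ = p ≫ j := pullback.lift_snd _ _ _
  have hιw : M.weq ι := by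
    refine M.weq_of_comp_left ι e₁ he₁w ?_
    rw [hιe₁]; exact M.weq_of_iso _ inferInstance
  have hιψ : ι ≫ ψ = p := by
    rw [hψdef, ← Category.assoc, hιe₂, Category.assoc, hjπ₁, Category.comp_id]
  have hψf : M.fib ψ := by
    refine M.fib_of_rlp_s10 ψ fun {A B} c hc hcw => ?_
    constructor
    intro u v sq
    obtain ⟨f', hf'⟩ := M.extend_fibrant hX c hc hcw (u ≫ e₁)
    haveI := M.lift_trivCof_fib c π hc hcw hπ
    have sq2 : CommSq (u ≫ e₂) c π (prod.lift (f' ≫ p) v) := by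
      constructor
      apply Limits.prod.hom_ext
      · simp only [Category.assoc, prod.lift_fst, ← hπ₀def]
        rw [← Category.assoc c f' p, hf', Category.assoc, hcond]
      · simp only [Category.assoc, prod.lift_snd, ← hπ₁def]
        rw [← sq.w, hψdef]
    have hlift₀ : f' ≫ p = sq2.lift ≫ π₀ := by
      rw [hπ₀def, ← Category.assoc, sq2.fac_right, prod.lift_fst]
    refine ⟨⟨⟨pullback.lift f' sq2.lift hlift₀, ?_, ?_⟩⟩⟩
    · apply pullback.hom_ext
      · rw [Category.assoc, pullback.lift_fst]; exact hf'
      · rw [Category.assoc, pullback.lift_snd]; exact sq2.fac_left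
    · show pullback.lift f' sq2.lift hlift₀ ≫ e₂ ≫ π₁ = v
      rw [← Category.assoc]
      have : pullback.lift f' sq2.lift hlift₀ ≫ e₂ = sq2.lift := pullback.lift_snd _ _ _
      rw [this, hπ₁def, ← Category.assoc, sq2.fac_right, prod.lift_snd]
  refine ⟨hψf, ?_, ?_⟩
  · intro hp
    exact M.weq_of_comp_right ι ψ hιw (by rw [hιψ]; exact hp)
  · intro hψw
    rw [← hιψ]
    exact M.weq_comp ι ψ hιw hψw

end Helpers

end QuillenModelStructure

/-- A map between fibrant objects is a weak equivalence iff it has the right homotopy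
extension lifting property with respect to all cofibrations. -/
theorem weq_iff_right_HELP (M : QuillenModelStructure C) {X Y : C}
    (p : X ⟶ Y) (hX : M.Fibrant X) (hY : M.Fibrant Y) :
    M.weq p ↔
      ∀ (YI : C) (j : Y ⟶ YI) (π : YI ⟶ Y ⨯ Y),
        M.weq j → M.fib π → j ≫ π = prod.lift (𝟙 Y) (𝟙 Y) →
        ∀ {A B : C} (i : A ⟶ B), M.cof i →
          ∀ (fA : A ⟶ X) (g : B ⟶ Y) (hA : A ⟶ YI),
            hA ≫ π = prod.lift (fA ≫ p) (i ≫ g) →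
            ∃ (f : B ⟶ X) (h : B ⟶ YI),
              i ≫ f = fA ∧ i ≫ h = hA ∧ h ≫ π = prod.lift (f ≫ p) g := by
  constructor
  · intro hp YI j π hjw hπ hjπ A B i hi fA g hA hcomm
    obtain ⟨hψf, hψiff⟩ := M.psi_key p hX hY YI j π hjw hπ hjπ
    haveI := M.lift_cof_trivFib i _ hi hψf (hψiff.mp hp)
    have hlift₀ : fA ≫ p = hA ≫ π ≫ prod.fst := by
      rw [← Category.assoc, hcomm, prod.lift_fst]
    have sq : CommSq (pullback.lift fA hA hlift₀) i
        (pullback.snd p (π ≫ prod.fst) ≫ π ≫ prod.snd) g := by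
      constructor
      rw [← Category.assoc, pullback.lift_snd, ← Category.assoc, hcomm, prod.lift_snd]
    refine ⟨sq.lift ≫ pullback.fst p (π ≫ prod.fst),
      sq.lift ≫ pullback.snd p (π ≫ prod.fst), ?_, ?_, ?_⟩
    · rw [← Category.assoc, sq.fac_left, pullback.lift_fst]
    · rw [← Category.assoc, sq.fac_left, pullback.lift_snd]
    · apply Limits.prod.hom_ext
      · rw [Category.assoc, Category.assoc, prod.lift_fst, Category.assoc,
          ← pullback.condition]
      · rw [Category.assoc, Category.assoc, prod.lift_snd]
        simpa using sq.fac_right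
  · intro H
    obtain ⟨YI, j, π, hjc, hjw, hπ, hjπ⟩ := M.factor_trivCof_fib (prod.lift (𝟙 Y) (𝟙 Y))
    obtain ⟨hψf, hψiff⟩ := M.psi_key p hX hY YI j π hjw hπ hjπ
    refine hψiff.mpr (M.weq_of_rlp _ fun {A B} c hc => ?_)
    constructor
    intro u v sq
    have hcomm : (u ≫ pullback.snd p (π ≫ prod.fst)) ≫ π =
        prod.lift ((u ≫ pullback.fst p (π ≫ prod.fst)) ≫ p) (c ≫ v) := by
      apply Limits.prod.hom_ext
      · have hcnd := pullback.condition (f := p) (g := π ≫ prod.fst)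
        simp only [Category.assoc] at hcnd ⊢
        rw [prod.lift_fst, ← hcnd]
      · rw [Category.assoc, Category.assoc, prod.lift_snd]
        simpa using sq.w
    obtain ⟨f, h, h1, h2, h3⟩ := H YI j π hjw hπ hjπ c hc (u ≫ pullback.fst p (π ≫ prod.fst)) v
      (u ≫ pullback.snd p (π ≫ prod.fst)) hcomm
    have hlift₀ : f ≫ p = h ≫ π ≫ prod.fst := by
      rw [← Category.assoc, h3, prod.lift_fst]
    refine ⟨⟨⟨pullback.lift f h hlift₀, ?_, ?_⟩⟩⟩
    · apply pullback.hom_ext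
      · rw [Category.assoc, pullback.lift_fst, h1]
      · rw [Category.assoc, pullback.lift_snd, h2]
    · rw [← Category.assoc, pullback.lift_snd, ← Category.assoc, h3, prod.lift_snd]
end

section
/- A morphism i : A → B between cofibrant objects in a Quillen model category is a weak equivalence if and only if it has the left homotopy extension lifting property with respect to all fibrations: for every fibration p : X → Y, morphisms f : A → X, g_Y : B → Y, cylinder object Z_A for A, and left homotopy h_Y : Z_A → Y from g_Y ∘ i to p ∘ f, there exist g : B → X and a left homotopy h : Z_A → X from g ∘ i to f with p ∘ g = g_Y and p ∘ h = h_Y. -/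
open CategoryTheory CategoryTheory.Limits

universe v u

variable {C : Type u} [Category.{v} C] [HasFiniteLimits C] [HasFiniteColimits C]

set_option linter.unnecessarySimpa false

section Aux
variable {C : Type u} [Category.{v} C]

lemma llp_coprod_inl {A B X Y : C} [HasBinaryCoproduct A B] [HasInitial C] (p : X ⟶ Y)
    [HasLiftingProperty (initial.to B) p] :
    HasLiftingProperty (coprod.inl : A ⟶ A ⨿ B) p := by
  constructor
  intro t b sq
  have sq2 : CommSq (initial.to X) (initial.to B) p (coprod.inr ≫ b) :=
    ⟨initial.hom_ext _ _⟩
  exact CommSq.HasLift.mk'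
    { l := coprod.desc t sq2.lift
      fac_left := by simp [coprod.inl_desc, coprod.inr_desc, coprod.inl_desc_assoc, coprod.inr_desc_assoc]
      fac_right := by
        apply coprod.hom_ext
        · simpa [coprod.inl_desc, coprod.inr_desc, coprod.inl_desc_assoc, coprod.inr_desc_assoc] using sq.w
        · simpa [coprod.inl_desc, coprod.inr_desc, coprod.inl_desc_assoc, coprod.inr_desc_assoc] using sq2.fac_right }

lemma llp_coprod_inr {A B X Y : C} [HasBinaryCoproduct A B] [HasInitial C] (p : X ⟶ Y)
    [HasLiftingProperty (initial.to A) p] :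
    HasLiftingProperty (coprod.inr : B ⟶ A ⨿ B) p := by
  constructor
  intro t b sq
  have sq2 : CommSq (initial.to X) (initial.to A) p (coprod.inl ≫ b) :=
    ⟨initial.hom_ext _ _⟩
  exact CommSq.HasLift.mk'
    { l := coprod.desc sq2.lift t
      fac_left := by simp [coprod.inl_desc, coprod.inr_desc, coprod.inl_desc_assoc, coprod.inr_desc_assoc]
      fac_right := by
        apply coprod.hom_ext
        · simpa [coprod.inl_desc, coprod.inr_desc, coprod.inl_desc_assoc, coprod.inr_desc_assoc] using sq2.fac_right
        · simpa [coprod.inl_desc, coprod.inr_desc, coprod.inl_desc_assoc, coprod.inr_desc_assoc] using sq.w }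

lemma llp_pushout_inr {A T Z X Y : C} (f : A ⟶ T) (g : A ⟶ Z) [HasPushout f g] (p : X ⟶ Y)
    [HasLiftingProperty f p] :
    HasLiftingProperty (pushout.inr f g : Z ⟶ pushout f g) p := by
  constructor
  intro t b sq
  have sq2 : CommSq (g ≫ t) f p (pushout.inl f g ≫ b) := ⟨by
    rw [Category.assoc, sq.w, ← Category.assoc, ← Category.assoc, pushout.condition]⟩
  exact CommSq.HasLift.mk'
    { l := pushout.desc sq2.lift t (by rw [sq2.fac_left])
      fac_left := by simp [pushout.inl_desc, pushout.inr_desc, pushout.inl_desc_assoc, pushout.inr_desc_assoc]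
      fac_right := by
        apply pushout.hom_ext
        · simpa [pushout.inl_desc, pushout.inr_desc, pushout.inl_desc_assoc, pushout.inr_desc_assoc] using sq2.fac_right
        · simpa [pushout.inl_desc, pushout.inr_desc, pushout.inl_desc_assoc, pushout.inr_desc_assoc] using sq.w }

lemma exists_lift {A B X Y : C} {i : A ⟶ B} {p : X ⟶ Y} [HasLiftingProperty i p]
    {f : A ⟶ X} {g : B ⟶ Y} (sq : CommSq f i p g) :
    ∃ l : B ⟶ X, i ≫ l = f ∧ l ≫ p = g :=
  ⟨sq.lift, sq.fac_left, sq.fac_right⟩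

end Aux

namespace QuillenModelStructure

variable {C : Type u} [Category.{v} C] [HasFiniteLimits C] [HasFiniteColimits C]
  (M : QuillenModelStructure C)

lemma weq_id (W : C) : M.weq (𝟙 W) := M.weq_of_iso _ inferInstance

lemma cof_of_llp {A B : C} (f : A ⟶ B)
    (H : ∀ {X Y : C} (p : X ⟶ Y), M.fib p → M.weq p → HasLiftingProperty f p) :
    M.cof f := by
  obtain ⟨Z, c, π, hcc, hπf, hπw, hfac⟩ := M.factor_cof_trivFib f
  haveI := H π hπf hπw
  have sq : CommSq c f π (𝟙 B) := ⟨by rw [Category.comp_id, hfac]⟩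
  refine M.cof_retract c f (𝟙 A) (𝟙 A) sq.lift π (by simp) sq.fac_right ?_ ?_ hcc
  · rw [Category.id_comp, sq.fac_left]
  · rw [hfac, Category.id_comp]

lemma weq_of_llp {A B : C} (f : A ⟶ B)
    (H : ∀ {X Y : C} (p : X ⟶ Y), M.fib p → HasLiftingProperty f p) :
    M.weq f := by
  obtain ⟨Z, c, π, hcc, hcw, hπf, hfac⟩ := M.factor_trivCof_fib f
  haveI := H π hπf
  have sq : CommSq c f π (𝟙 B) := ⟨by rw [Category.comp_id, hfac]⟩
  refine M.weq_retract c f (𝟙 A) (𝟙 A) sq.lift π (by simp) sq.fac_right ?_ ?_ hcw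
  · rw [Category.id_comp, sq.fac_left]
  · rw [hfac, Category.id_comp]

lemma cof_comp {A B D : C} (f : A ⟶ B) (g : B ⟶ D) (hf : M.cof f) (hg : M.cof g) :
    M.cof (f ≫ g) := by
  refine M.cof_of_llp _ (fun p hpf hpw => ?_)
  haveI := M.lift_cof_trivFib f p hf hpf hpw
  haveI := M.lift_cof_trivFib g p hg hpf hpw
  infer_instance

lemma cof_inl {A B : C} (hB : M.Cofibrant B) : M.cof (coprod.inl : A ⟶ A ⨿ B) := by
  refine M.cof_of_llp _ (fun p hpf hpw => ?_)
  haveI := M.lift_cof_trivFib (initial.to B) p hB hpf hpw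
  exact llp_coprod_inl p

lemma cof_inr {A B : C} (hA : M.Cofibrant A) : M.cof (coprod.inr : B ⟶ A ⨿ B) := by
  refine M.cof_of_llp _ (fun p hpf hpw => ?_)
  haveI := M.lift_cof_trivFib (initial.to A) p hA hpf hpw
  exact llp_coprod_inr p

end QuillenModelStructure

/-- Dual statement: a map between cofibrant objects is a weak equivalence iff it has the
left homotopy extension lifting property with respect to all fibrations. -/
theorem weq_iff_left_HELP (M : QuillenModelStructure C) {A B : C}
    (i : A ⟶ B) (hA : M.Cofibrant A) (hB : M.Cofibrant B) :
    M.weq i ↔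
      ∀ (Z : C) (ins : A ⨿ A ⟶ Z) (σ : Z ⟶ A),
        M.cof ins → M.weq σ → ins ≫ σ = coprod.desc (𝟙 A) (𝟙 A) →
        ∀ {X Y : C} (p : X ⟶ Y), M.fib p →
          ∀ (f : A ⟶ X) (gY : B ⟶ Y) (hY : Z ⟶ Y),
            coprod.inl ≫ ins ≫ hY = i ≫ gY → coprod.inr ≫ ins ≫ hY = f ≫ p →
            ∃ (g : B ⟶ X) (h : Z ⟶ X),
              g ≫ p = gY ∧ h ≫ p = hY ∧
                coprod.inl ≫ ins ≫ h = i ≫ g ∧ coprod.inr ≫ ins ≫ h = f := by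
  constructor
  · -- forward direction
    intro hi Z ins σ hins hσ hfold X Y p hp f gY hY e1 e2
    -- endpoint inclusions of the given cylinder are trivial cofibrations
    have hj0w : M.weq (coprod.inl ≫ ins) := M.weq_of_comp_left _ σ hσ (by
      rw [Category.assoc, hfold, coprod.inl_desc]; exact M.weq_id A)
    have hj1w : M.weq (coprod.inr ≫ ins) := M.weq_of_comp_left _ σ hσ (by
      rw [Category.assoc, hfold, coprod.inr_desc]; exact M.weq_id A)
    have hj1c : M.cof (coprod.inr ≫ ins) := M.cof_comp _ _ (M.cof_inr hA) hins
    -- Brown factorization of (i, id) : A ⊔ B → B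
    obtain ⟨T, m, r, hmc, hrf, hrw, hmr⟩ := M.factor_cof_trivFib (coprod.desc i (𝟙 B))
    have hi1r : coprod.inl ≫ m ≫ r = i := by rw [hmr, coprod.inl_desc]
    have hi2r : coprod.inr ≫ m ≫ r = 𝟙 B := by rw [hmr, coprod.inr_desc]
    have hi1c : M.cof (coprod.inl ≫ m) := M.cof_comp _ _ (M.cof_inl hB) hmc
    have hi1w : M.weq (coprod.inl ≫ m) := M.weq_of_comp_left _ r hrw (by
      rw [Category.assoc, hi1r]; exact hi)
    -- lift against the pushout P of i₁ = inl ≫ m and j₀ = inl ≫ ins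
    haveI hl1 : HasLiftingProperty (coprod.inl ≫ m) p := M.lift_trivCof_fib _ p hi1c hi1w hp
    haveI hl2 : HasLiftingProperty
        (pushout.inr (coprod.inl ≫ m) (coprod.inl ≫ ins)) p := llp_pushout_inr _ _ p
    haveI hl3 : HasLiftingProperty (coprod.inr ≫ ins) p := M.lift_trivCof_fib _ p hj1c hj1w hp
    obtain ⟨L, hLl, hLr⟩ := exists_lift (i := (coprod.inr ≫ ins) ≫
        pushout.inr (coprod.inl ≫ m) (coprod.inl ≫ ins))
      (⟨by
        simp only [Category.assoc, pushout.inr_desc]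
        exact e2.symm⟩ : CommSq f _ p
        (pushout.desc (r ≫ gY) hY (by
          simp only [Category.assoc]
          rw [reassoc_of% hi1r]
          exact e1.symm)))
    have hh0p : pushout.inr (coprod.inl ≫ m) (coprod.inl ≫ ins) ≫ L ≫ p = hY := by
      rw [hLr, pushout.inr_desc]
    have hg1p : pushout.inl (coprod.inl ≫ m) (coprod.inl ≫ ins) ≫ L ≫ p = r ≫ gY := by
      rw [hLr, pushout.inl_desc]
    have hj1h0 : coprod.inr ≫ ins ≫
        pushout.inr (coprod.inl ≫ m) (coprod.inl ≫ ins) ≫ L = f := by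
      simpa only [Category.assoc] using hLl
    have hj0h0 : coprod.inl ≫ ins ≫
          pushout.inr (coprod.inl ≫ m) (coprod.inl ≫ ins) ≫ L
        = coprod.inl ≫ m ≫ pushout.inl (coprod.inl ≫ m) (coprod.inl ≫ ins) ≫ L := by
      simp only [← Category.assoc]
      rw [pushout.condition]
    have hgp : (coprod.inr ≫ m ≫
        pushout.inl (coprod.inl ≫ m) (coprod.inl ≫ ins) ≫ L) ≫ p = gY := by
      simp only [Category.assoc]
      rw [hLr, pushout.inl_desc, reassoc_of% hi2r]
    -- a cylinder on T, and the homotopy K between r ≫ i₂ and the identity, over B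
    obtain ⟨ZT, cT, σT, hcT, hσTf, hσTw, hcTfold⟩ := M.factor_cof_trivFib (coprod.desc (𝟙 T) (𝟙 T))
    haveI := M.lift_cof_trivFib cT r hcT hrf hrw
    obtain ⟨K, hKl, hKr⟩ := exists_lift
      (⟨by
        conv_rhs => rw [← Category.assoc, hcTfold]
        apply coprod.hom_ext
        · simp only [coprod.inl_desc_assoc, Category.assoc, coprod.inl_desc, Category.id_comp]
          rw [hi2r, Category.comp_id]
        · simp [coprod.inl_desc, coprod.inr_desc, coprod.inl_desc_assoc, coprod.inr_desc_assoc]⟩ : CommSq (coprod.desc (r ≫ coprod.inr ≫ m) (𝟙 T)) cT r (σT ≫ r))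
    -- a good cylinder on A, and the transport ψ of the cylinder on T along i₁
    obtain ⟨Z2, ins2, σ2, hins2, hσ2f, hσ2w, hfold2⟩ := M.factor_cof_trivFib (coprod.desc (𝟙 A) (𝟙 A))
    haveI := M.lift_cof_trivFib ins2 σT hins2 hσTf hσTw
    obtain ⟨ψ, hψl, hψr⟩ := exists_lift
      (⟨by
        rw [Category.assoc, hcTfold, reassoc_of% hfold2]
        apply coprod.hom_ext <;> simp⟩ :
        CommSq (coprod.map (coprod.inl ≫ m) (coprod.inl ≫ m) ≫ cT) ins2 σT
          (σ2 ≫ coprod.inl ≫ m))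
    -- the homotopy W on Z2, from i ≫ g to i₁ ≫ g₁
    have hW1 : coprod.inr ≫ ins2 ≫ ψ ≫ K ≫
          pushout.inl (coprod.inl ≫ m) (coprod.inl ≫ ins) ≫ L
        = coprod.inl ≫ m ≫ pushout.inl (coprod.inl ≫ m) (coprod.inl ≫ ins) ≫ L := by
      rw [reassoc_of% hψl]
      simp only [coprod.inr_map_assoc]
      rw [reassoc_of% hKl]
      simp only [coprod.inr_desc_assoc, Category.id_comp, Category.assoc]
    have hW0 : coprod.inl ≫ ins2 ≫ ψ ≫ K ≫
          pushout.inl (coprod.inl ≫ m) (coprod.inl ≫ ins) ≫ L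
        = i ≫ coprod.inr ≫ m ≫
          pushout.inl (coprod.inl ≫ m) (coprod.inl ≫ ins) ≫ L := by
      rw [reassoc_of% hψl]
      simp only [coprod.inl_map_assoc]
      rw [reassoc_of% hKl]
      simp only [coprod.inl_desc_assoc, Category.assoc]
      rw [reassoc_of% hi1r]
    have hWp : (ψ ≫ K ≫
          pushout.inl (coprod.inl ≫ m) (coprod.inl ≫ ins) ≫ L) ≫ p
        = σ2 ≫ i ≫ gY := by
      simp only [Category.assoc]
      rw [hLr, pushout.inl_desc, reassoc_of% hKr, reassoc_of% hψr, reassoc_of% hi1r]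
    -- glue W and h₀ on the pushout Q, and build the corrected homotopy by two liftings
    have hucond : (coprod.inr ≫ ins2) ≫ (ψ ≫ K ≫
          pushout.inl (coprod.inl ≫ m) (coprod.inl ≫ ins) ≫ L)
        = (coprod.inl ≫ ins) ≫
          (pushout.inr (coprod.inl ≫ m) (coprod.inl ≫ ins) ≫ L) := by
      simp only [Category.assoc]
      rw [hW1, hj0h0]
    have hρcond : (coprod.inr ≫ ins2) ≫ (σ2 ≫ coprod.inl ≫ ins)
        = (coprod.inl ≫ ins) ≫ 𝟙 Z := by
      simp only [Category.assoc, Category.comp_id]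
      rw [reassoc_of% hfold2]
      simp [coprod.inl_desc, coprod.inr_desc, coprod.inl_desc_assoc, coprod.inr_desc_assoc]
    have hj12c : M.cof (coprod.inr ≫ ins2) := M.cof_comp _ _ (M.cof_inr hA) hins2
    have hj12w : M.weq (coprod.inr ≫ ins2) := M.weq_of_comp_left _ σ2 hσ2w (by
      rw [Category.assoc, hfold2, coprod.inr_desc]; exact M.weq_id A)
    have hq2w : M.weq (pushout.inr (coprod.inr ≫ ins2) (coprod.inl ≫ ins)) := by
      refine M.weq_of_llp _ (fun p' hp' => ?_)
      haveI := M.lift_trivCof_fib (coprod.inr ≫ ins2) p' hj12c hj12w hp'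
      exact llp_pushout_inr _ _ p'
    have hρw : M.weq (pushout.desc (σ2 ≫ coprod.inl ≫ ins) (𝟙 Z) hρcond) := by
      refine M.weq_of_comp_right (pushout.inr (coprod.inr ≫ ins2) (coprod.inl ≫ ins)) _
        hq2w ?_
      rw [pushout.inr_desc]
      exact M.weq_id Z
    have hup : pushout.desc (ψ ≫ K ≫
          pushout.inl (coprod.inl ≫ m) (coprod.inl ≫ ins) ≫ L)
          (pushout.inr (coprod.inl ≫ m) (coprod.inl ≫ ins) ≫ L) hucond ≫ p
        = pushout.desc (σ2 ≫ coprod.inl ≫ ins) (𝟙 Z) hρcond ≫ hY := by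
      apply pushout.hom_ext
      · rw [pushout.inl_desc_assoc, pushout.inl_desc_assoc, hWp]
        simp only [Category.assoc]
        rw [e1]
      · rw [pushout.inr_desc_assoc, pushout.inr_desc_assoc, Category.id_comp]
        simpa only [Category.assoc] using hh0p
    -- factor ρ and lift twice
    obtain ⟨N, c', π', hc'c, hc'w, hπ'f, hρfac⟩ :=
      M.factor_trivCof_fib (pushout.desc (σ2 ≫ coprod.inl ≫ ins) (𝟙 Z) hρcond)
    have hπ'w : M.weq π' := M.weq_of_comp_right c' π' hc'w (by rw [hρfac]; exact hρw)
    haveI := M.lift_trivCof_fib c' p hc'c hc'w hp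
    obtain ⟨U, hUl, hUr⟩ := exists_lift
      (⟨by rw [hup, ← hρfac, Category.assoc]⟩ :
        CommSq (pushout.desc (ψ ≫ K ≫
          pushout.inl (coprod.inl ≫ m) (coprod.inl ≫ ins) ≫ L)
          (pushout.inr (coprod.inl ≫ m) (coprod.inl ≫ ins) ≫ L) hucond) c' p (π' ≫ hY))
    haveI := M.lift_cof_trivFib ins π' hins hπ'f hπ'w
    obtain ⟨s, hsl, hsr⟩ := exists_lift
      (⟨by
        rw [Category.comp_id, Category.assoc, hρfac]
        apply coprod.hom_ext
        · simp only [coprod.inl_desc_assoc, Category.assoc, pushout.inl_desc,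
            reassoc_of% hfold2, Category.id_comp]
        · simp only [coprod.inr_desc_assoc, Category.assoc, pushout.inr_desc,
            Category.comp_id]⟩ :
        CommSq (coprod.desc
            (coprod.inl ≫ ins2 ≫ pushout.inl (coprod.inr ≫ ins2) (coprod.inl ≫ ins))
            (coprod.inr ≫ ins ≫ pushout.inr (coprod.inr ≫ ins2) (coprod.inl ≫ ins)) ≫ c')
          ins π' (𝟙 Z))
    refine ⟨coprod.inr ≫ m ≫ pushout.inl (coprod.inl ≫ m) (coprod.inl ≫ ins) ≫ L,
      s ≫ U, hgp, ?_, ?_, ?_⟩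
    · rw [Category.assoc, hUr, reassoc_of% hsr]
    · rw [reassoc_of% hsl, hUl]
      simp only [coprod.inl_desc_assoc, Category.assoc, pushout.inl_desc]
      exact hW0
    · rw [reassoc_of% hsl, hUl]
      simp only [coprod.inr_desc_assoc, Category.assoc, pushout.inr_desc]
      exact hj1h0
  · -- reverse direction
    intro H
    obtain ⟨E, c, q, hcc, hcw, hqf, hqi⟩ := M.factor_trivCof_fib i
    obtain ⟨Z, ins, σ, hins, hσf, hσw, hfold⟩ := M.factor_cof_trivFib (coprod.desc (𝟙 A) (𝟙 A))
    obtain ⟨g, h, hg, hh, h0, h1⟩ := H Z ins σ hins hσw hfold q hqf c (𝟙 B) (σ ≫ i)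
      (by rw [reassoc_of% hfold, coprod.inl_desc_assoc, Category.id_comp, Category.comp_id])
      (by rw [reassoc_of% hfold, coprod.inr_desc_assoc, Category.id_comp, ← hqi])
    have hj0w : M.weq (coprod.inl ≫ ins) := M.weq_of_comp_left _ σ hσw (by
      rw [Category.assoc, hfold, coprod.inl_desc]; exact M.weq_id A)
    have hj1w : M.weq (coprod.inr ≫ ins) := M.weq_of_comp_left _ σ hσw (by
      rw [Category.assoc, hfold, coprod.inr_desc]; exact M.weq_id A)
    have hhw : M.weq h := M.weq_of_comp_right (coprod.inr ≫ ins) h hj1w (by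
      rw [Category.assoc, h1]; exact hcw)
    have higw : M.weq (i ≫ g) := by
      have := M.weq_comp (coprod.inl ≫ ins) h hj0w hhw
      rwa [Category.assoc, h0] at this
    have hqgw : M.weq (q ≫ g) := M.weq_of_comp_right c (q ≫ g) hcw (by
      rwa [← Category.assoc, hqi])
    have hqw : M.weq q := M.weq_retract (q ≫ g) q (𝟙 E) (𝟙 E) g q (by simp) hg
      (by rw [Category.id_comp]) (by rw [Category.assoc, hg, Category.comp_id,
        Category.id_comp]) hqgw
    rw [← hqi]
    exact M.weq_comp c q hcw hqw
end
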